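/- If a group G has BVC, then G has finitely many conjugacy classes of finite subgroups; in particular, the orders of finite subgroups of G are bounded. -/

import Mathlib

def IsVirtuallyCyclic (G : Type*) [Group G] : Prop :=
  ∃ H : Subgroup G, IsCyclic H ∧ H.FiniteIndex

def HasBVC (G : Type*) [Group G] : Prop :=
  ∃ S : Finset (Subgroup G), (∀ V ∈ S, IsVirtuallyCyclic V) ∧
    ∀ W : Subgroup G, IsVirtuallyCyclic W →
      ∃ V ∈ S, ∃ g : G, W.map (MulAut.conj g).toMonoidHom ≤ V

section AuxBVC

open Subgroup

variable {V : Type*} [Group V]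




lemma aux_map_conj_mul (K : Subgroup V) (a b : V) :
    K.map (MulAut.conj (a * b)).toMonoidHom
      = (K.map (MulAut.conj b).toMonoidHom).map (MulAut.conj a).toMonoidHom := by
  rw [Subgroup.map_map]
  congr 1
  ext x
  simp [mul_assoc]

lemma aux_map_conj_subtype (P : Subgroup V) (H : Subgroup P) (v : P) :
    (H.map (MulAut.conj v).toMonoidHom).map P.subtype
      = (H.map P.subtype).map (MulAut.conj (v : V)).toMonoidHom := by
  ext x
  simp only [Subgroup.mem_map, MulEquiv.coe_toMonoidHom, MulAut.conj_apply, Subgroup.coe_subtype]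
  constructor
  · rintro ⟨y, ⟨z, hz, rfl⟩, rfl⟩
    exact ⟨z, ⟨z, hz, rfl⟩, by push_cast; rfl⟩
  · rintro ⟨y, ⟨z, hz, rfl⟩, rfl⟩
    exact ⟨v * z * v⁻¹, ⟨z, hz, rfl⟩, by push_cast; rfl⟩

lemma aux_card_map_conj (K : Subgroup V) (g : V) :
    Nat.card (K.map (MulAut.conj g).toMonoidHom) = Nat.card K := by
  refine Nat.card_congr ?_
  exact (Subgroup.equivMapOfInjective K _ (MulAut.conj g).injective).symm.toEquiv

-- subgroups contained in a finite subgroup form a finite set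
lemma aux_finite_subgroups_le {E : Subgroup V} (hE : (E : Set V).Finite) :
    {K : Subgroup V | K ≤ E}.Finite := by
  have h : Set.InjOn (fun K : Subgroup V => (K : Set V)) {K | K ≤ E} :=
    fun K _ L _ h => SetLike.coe_injective h
  have himg : (fun K : Subgroup V => (K : Set V)) '' {K | K ≤ E} ⊆ {s | s ⊆ (E : Set V)} := by
    rintro s ⟨K, hK, rfl⟩
    exact hK
  exact Set.Finite.of_finite_image (hE.finite_subsets.subset himg) h



variable {V : Type*} [Group V]

lemma aux_finite_of_fi (H : Subgroup V) [H.FiniteIndex] (h : Finite H) : Finite V := by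
  have e := Subgroup.groupEquivQuotientProdSubgroup (s := H)
  have : Finite ((V ⧸ H) × H) := by infer_instance
  exact Finite.of_equiv _ e.symm

lemma aux_zpowers_tors {t x : V} (ht : ¬ IsOfFinOrder t) (hx : x ∈ Subgroup.zpowers t)
    (hfo : IsOfFinOrder x) : x = 1 := by
  obtain ⟨k, hk⟩ := Subgroup.mem_zpowers_iff.1 hx
  obtain ⟨n, hn, hxn⟩ := (isOfFinOrder_iff_pow_eq_one).1 hfo
  have hinj : Function.Injective fun n : ℤ => t ^ n := injective_zpow_iff_not_isOfFinOrder.2 ht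
  have : t ^ (k * n) = t ^ (0 : ℤ) := by
    rw [zpow_zero, zpow_mul, hk]; exact_mod_cast hxn
  have hkn : k * n = 0 := hinj this
  have hk0 : k = 0 := by
    rcases mul_eq_zero.1 hkn with h | h
    · exact h
    · exact absurd h (by exact_mod_cast hn.ne')
  rw [← hk, hk0, zpow_zero]

lemma aux_conj_finorder {x : V} (v : V) (h : IsOfFinOrder x) : IsOfFinOrder (v * x * v⁻¹) := by
  obtain ⟨n, hn, hxn⟩ := isOfFinOrder_iff_pow_eq_one.1 h
  exact isOfFinOrder_iff_pow_eq_one.2 ⟨n, hn, by rw [conj_pow, hxn, mul_one, mul_inv_cancel]⟩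

lemma aux_mem_finorder {K : Subgroup V} (hK : (K : Set V).Finite) {x : V} (hx : x ∈ K) :
    IsOfFinOrder x := by
  haveI : Finite K := hK.to_subtype
  have h1 : (⟨x, hx⟩ : K) ^ Nat.card K = 1 := pow_card_eq_one'
  have hc : 0 < Nat.card K := Nat.card_pos
  refine isOfFinOrder_iff_pow_eq_one.2 ⟨Nat.card K, hc, ?_⟩
  calc x ^ Nat.card K = ((⟨x, hx⟩ : K) ^ Nat.card K : K) := by rw [SubmonoidClass.coe_pow]
    _ = ((1 : K) : V) := by rw [h1]
    _ = 1 := rfl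

lemma aux_map_conj_one (K : Subgroup V) : K.map (MulAut.conj (1 : V)).toMonoidHom = K := by
  ext x
  simp [Subgroup.mem_map]


theorem lemA (V : Type*) [Group V] (hV : IsVirtuallyCyclic V) :
    ∃ T : Set (Subgroup V), T.Finite ∧ (∀ E ∈ T, (E : Set V).Finite) ∧
      ∀ K : Subgroup V, (K : Set V).Finite →
        ∃ E ∈ T, ∃ v : V, K.map (MulAut.conj v).toMonoidHom ≤ E := by
  classical
  cases finite_or_infinite V with
  | inl h =>
      refine ⟨{⊤}, Set.finite_singleton _, ?_, ?_⟩
      · intro E _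
        exact Set.toFinite _
      · intro K _
        exact ⟨⊤, rfl, 1, le_top⟩
  | inr hInf =>
      obtain ⟨H0, hH0cyc, hH0fi⟩ := hV
      haveI := hH0fi
      set C := H0.normalCore with hCdef
      haveI : C.FiniteIndex := Subgroup.finiteIndex_normalCore H0
      haveI : IsCyclic C := @Subgroup.isCyclic_of_le V _ C H0 H0.normalCore_le hH0cyc
      obtain ⟨g0, hg0⟩ := (inferInstance : IsCyclic C).exists_generator
      set t : V := (g0 : V) with htdef
      have htmem : t ∈ C := g0.2
      have hCt : C ≤ Subgroup.zpowers t := by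
        intro x hx
        obtain ⟨n, hn⟩ := hg0 ⟨x, hx⟩
        refine Subgroup.mem_zpowers_iff.2 ⟨n, ?_⟩
        have := congrArg (fun y : C => (y : V)) hn
        simpa using this
      have htinf : ¬ IsOfFinOrder t := by
        intro hfin
        haveI : Finite (Subgroup.zpowers t) := hfin.finite_zpowers
        haveI : Finite C := Set.Finite.to_subtype
          ((Set.toFinite (Subgroup.zpowers t : Set V)).subset hCt)
        exact absurd (aux_finite_of_fi C inferInstance) (not_finite_iff_infinite.2 hInf)
      -- the key dichotomy: conjugation sends t to t or t⁻¹
      have key : ∀ v : V, v * t * v⁻¹ = t ∨ v * t * v⁻¹ = t⁻¹ := by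
        intro v
        have hCnormal : C.Normal := by rw [hCdef]; infer_instance
        have h1 : v * t * v⁻¹ ∈ C := hCnormal.conj_mem t htmem v
        have h2 : v⁻¹ * t * v⁻¹⁻¹ ∈ C := hCnormal.conj_mem t htmem v⁻¹
        rw [inv_inv] at h2
        obtain ⟨k, hk⟩ := Subgroup.mem_zpowers_iff.1 (hCt h1)
        obtain ⟨j, hj⟩ := Subgroup.mem_zpowers_iff.1 (hCt h2)
        have hinj : Function.Injective fun n : ℤ => t ^ n :=
          injective_zpow_iff_not_isOfFinOrder.2 htinf
        have hcomp : t ^ (j * k) = t ^ (1 : ℤ) := by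
          have e1 : v⁻¹ * t * v = v⁻¹ * t * v⁻¹⁻¹ := by rw [inv_inv]
          rw [zpow_one, zpow_mul, hj, e1, conj_zpow, inv_inv, hk]
          group
        have hjk : j * k = 1 := hinj hcomp
        have : k = 1 ∨ k = -1 :=
          Int.isUnit_iff.1 (IsUnit.of_mul_eq_one (a := k) j (by rw [mul_comm]; exact hjk))
        rcases this with h | h
        · left; rw [← hk, h, zpow_one]
        · right; rw [← hk, h, zpow_neg_one]
      set N : Subgroup V := Subgroup.centralizer {t} with hNdef
      have hmemN : ∀ v : V, v ∈ N ↔ v * t * v⁻¹ = t := by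
        intro v
        rw [hNdef, Subgroup.mem_centralizer_iff]
        constructor
        · intro hc
          have h1 : t * v = v * t := hc t (Set.mem_singleton t)
          rw [← h1]; group
        · intro hc x hx
          rw [Set.mem_singleton_iff] at hx
          subst hx
          have hvt : v * t = t * v := by
            calc v * t = (v * t * v⁻¹) * v := by group
              _ = t * v := by rw [hc]
          rw [hvt]
      have hN2 : ∀ v : V, v ∉ N → v * t * v⁻¹ = t⁻¹ := fun v hv =>
        (key v).resolve_left fun h => hv ((hmemN v).2 h)
      have hCN : C ≤ N := by
        intro x hx
        obtain ⟨k, hk⟩ := Subgroup.mem_zpowers_iff.1 (hCt hx)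
        rw [hmemN, ← hk, ((Commute.refl t).zpow_left k).eq]
        group
      haveI : N.FiniteIndex := by
        constructor
        intro h0
        have := Subgroup.index_dvd_of_le hCN
        rw [h0] at this
        exact (‹C.FiniteIndex›.index_ne_zero) (zero_dvd_iff.1 this)
      have htN : t ∈ N := hCN htmem
      -- N is closed under conjugation by arbitrary elements of V
      have hNconj : ∀ v x : V, x ∈ N → v * x * v⁻¹ ∈ N := by
        intro v x hx
        have hx' : x * t * x⁻¹ = t := (hmemN x).1 hx
        have hxinv : ∀ u : V, x * u * x⁻¹ = u → x * u⁻¹ * x⁻¹ = u⁻¹ := by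
          intro u hu
          have := congrArg (·⁻¹) hu
          simpa [mul_assoc] using this
        rw [hmemN]
        rcases key v⁻¹ with h | h
        · rw [inv_inv] at h
          calc v * x * v⁻¹ * t * (v * x * v⁻¹)⁻¹
              = v * (x * (v⁻¹ * t * v) * x⁻¹) * v⁻¹ := by group
            _ = v * (v⁻¹ * t * v) * v⁻¹ := by rw [h, hx']
            _ = t := by group
        · rw [inv_inv] at h
          have hx'' : x * t⁻¹ * x⁻¹ = t⁻¹ := hxinv t hx'
          calc v * x * v⁻¹ * t * (v * x * v⁻¹)⁻¹
              = v * (x * (v⁻¹ * t * v) * x⁻¹) * v⁻¹ := by group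
            _ = v * (v⁻¹ * t * v) * v⁻¹ := by rw [h, hx'']
            _ = t := by group
      -- C viewed inside N is central with finite index
      set C' : Subgroup N := C.subgroupOf N with hC'def
      haveI : C'.FiniteIndex := Subgroup.instFiniteIndex_subgroupOf C N
      have hC'cen : C' ≤ Subgroup.center N := by
        intro x hx
        rw [Subgroup.mem_center_iff]
        intro n
        have hxC : (x : V) ∈ C := hx
        obtain ⟨k, hk⟩ := Subgroup.mem_zpowers_iff.1 (hCt hxC)
        have hnt : (n : V) * t = t * (n : V) := by
          have h1 : (n : V) * t * (n : V)⁻¹ = t := (hmemN n).1 n.2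
          calc (n : V) * t = ((n : V) * t * (n : V)⁻¹) * n := by group
            _ = t * n := by rw [h1]
        have hcomm : (n : V) * (x : V) = (x : V) * (n : V) := by
          rw [← hk]
          exact (Commute.zpow_right (hnt) k).eq
        exact Subtype.ext hcomm
      haveI hAfi : (Subgroup.center N).FiniteIndex := by
        constructor
        intro h0
        have := Subgroup.index_dvd_of_le hC'cen
        rw [h0] at this
        exact (‹C'.FiniteIndex›.index_ne_zero) (zero_dvd_iff.1 this)
      have hC'normal : C'.Normal := by
        constructor
        intro x hx n
        have hCnormal : C.Normal := by rw [hCdef]; infer_instance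
        exact hCnormal.conj_mem (x : V) hx (n : V)
      -- all torsion elements of N are killed by the index of C'
      have hzt : ∀ y : N, (y : V) ∈ C → IsOfFinOrder (y : V) → y = 1 := by
        intro y hyC hyfo
        exact Subtype.ext (aux_zpowers_tors htinf (hCt hyC) hyfo)
      have hkill : ∀ x : N, IsOfFinOrder x → x ^ C'.index = 1 := by
        intro x hx
        haveI := hC'normal
        have h1 : x ^ C'.index ∈ C' := C'.pow_index_mem x
        have h2 : IsOfFinOrder ((x ^ C'.index : N) : V) := by
          obtain ⟨n, hn, hxn⟩ := isOfFinOrder_iff_pow_eq_one.1 hx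
          refine isOfFinOrder_iff_pow_eq_one.2 ⟨n, hn, ?_⟩
          have : (x ^ C'.index) ^ n = 1 := by rw [← pow_mul, mul_comm, pow_mul, hxn, one_pow]
          calc ((x ^ C'.index : N) : V) ^ n = (((x ^ C'.index) ^ n : N) : V) := by
                norm_cast
            _ = 1 := by rw [this]; rfl
        exact hzt _ h1 h2
      -- transfer to the center
      set m := (Subgroup.center N).index with hmdef
      set φ : N →* Subgroup.center N := MonoidHom.transferCenterPow N with hφdef
      have hφN : ∀ x : N, ((φ x : Subgroup.center N) : N) = x ^ m :=
        fun x => MonoidHom.transferCenterPow_apply x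
      have hm0 : m ≠ 0 := hAfi.index_ne_zero
      -- torsion elements of N are closed under multiplication
      have hφtors : ∀ z : N, IsOfFinOrder z → IsOfFinOrder ((φ z : Subgroup.center N) : N) := by
        intro z hz
        rw [hφN]
        exact hz.pow
      have htors_mul : ∀ x y : N, IsOfFinOrder x → IsOfFinOrder y → IsOfFinOrder (x * y) := by
        intro x y hx hy
        have hc : Commute ((φ x : Subgroup.center N) : N) ((φ y : Subgroup.center N) : N) := by
          have := (Subgroup.mem_center_iff.1 (φ x).2) ((φ y : Subgroup.center N) : N)
          exact this.symm
        have h1 : IsOfFinOrder ((x * y) ^ m) := by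
          rw [← hφN (x * y), map_mul]
          have : ((φ x * φ y : Subgroup.center N) : N)
              = ((φ x : Subgroup.center N) : N) * ((φ y : Subgroup.center N) : N) := rfl
          rw [this]
          exact hc.isOfFinOrder_mul (hφtors x hx) (hφtors y hy)
        exact h1.of_pow hm0
      -- F : the subgroup of V of torsion elements of N
      have hlift : ∀ x : V, (hxN : x ∈ N) → IsOfFinOrder x → IsOfFinOrder (⟨x, hxN⟩ : N) := by
        intro x hxN hxfo
        obtain ⟨n, hn, hxn⟩ := isOfFinOrder_iff_pow_eq_one.1 hxfo
        exact isOfFinOrder_iff_pow_eq_one.2 ⟨n, hn, Subtype.ext (by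
          rw [SubmonoidClass.coe_pow]; exact hxn)⟩
      set Fc : Set V := {x : V | x ∈ N ∧ IsOfFinOrder x} with hFcdef
      have hFcmul : ∀ {a b : V}, a ∈ Fc → b ∈ Fc → a * b ∈ Fc := by
        rintro x y ⟨hxN, hxfo⟩ ⟨hyN, hyfo⟩
        refine ⟨N.mul_mem hxN hyN, ?_⟩
        have := htors_mul _ _ (hlift x hxN hxfo) (hlift y hyN hyfo)
        obtain ⟨n, hn, hmul⟩ := isOfFinOrder_iff_pow_eq_one.1 this
        refine isOfFinOrder_iff_pow_eq_one.2 ⟨n, hn, ?_⟩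
        have h2 := congrArg (fun z : N => (z : V)) hmul
        simpa [SubmonoidClass.coe_pow] using h2
      have hFcone : (1 : V) ∈ Fc := ⟨N.one_mem, IsOfFinOrder.one⟩
      have hFcinv : ∀ {a : V}, a ∈ Fc → a⁻¹ ∈ Fc := by
        rintro x ⟨hxN, hxfo⟩
        exact ⟨N.inv_mem hxN, hxfo.inv⟩
      set F : Subgroup V := ⟨⟨⟨Fc, hFcmul⟩, hFcone⟩, hFcinv⟩ with hFdef
      have hFmem : ∀ x : V, x ∈ F ↔ x ∈ N ∧ IsOfFinOrder x := fun x => Iff.rfl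
      have hFconj : ∀ v x : V, x ∈ F → v * x * v⁻¹ ∈ F := by
        rintro v x ⟨h1, h2⟩
        exact ⟨hNconj v x h1, aux_conj_finorder v h2⟩
      -- F is finite
      haveI : Finite (N ⧸ C') := Subgroup.finite_quotient_of_finiteIndex (H := C')
      have hFfin : (F : Set V).Finite := by
        haveI : Finite F := by
          have hinj : Function.Injective
              (fun x : F => (QuotientGroup.mk (⟨(x : V), x.2.1⟩ : N) : N ⧸ C')) := by
            intro x y hxy
            have h1 : (⟨(x : V), x.2.1⟩ : N)⁻¹ * (⟨(y : V), y.2.1⟩ : N) ∈ C' :=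
              (QuotientGroup.leftRel_apply).1 (Quotient.exact hxy)
            have h2 : IsOfFinOrder ((x : V)⁻¹ * (y : V)) := by
              have : (x : V)⁻¹ * (y : V) ∈ F := F.mul_mem (F.inv_mem x.2) y.2
              exact this.2
            have h3 : ((⟨(x : V), x.2.1⟩ : N)⁻¹ * (⟨(y : V), y.2.1⟩ : N)) = 1 := by
              refine hzt _ h1 ?_
              obtain ⟨n, hn, hpow⟩ := isOfFinOrder_iff_pow_eq_one.1 h2
              exact isOfFinOrder_iff_pow_eq_one.2 ⟨n, hn, by
                rw [← hpow]
                norm_cast⟩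
            have h4 := congrArg (fun z : N => (z : V)) h3
            have h5 : (x : V)⁻¹ * (y : V) = 1 := by simpa using h4
            exact Subtype.ext (inv_mul_eq_one.mp h5)
          exact Finite.of_injective _ hinj
        exact Set.toFinite _
      -- the finite set of candidate "reflection" elements
      haveI : Finite (V ⧸ C) := Subgroup.finite_quotient_of_finiteIndex (H := C)
      set Sig : Set V :=
        Set.range (fun p : (V ⧸ C) × Bool => (if p.2 then t else 1) * (Quotient.out p.1))
        with hSigdef
      have hSigfin : Sig.Finite := Set.finite_range _
      set E : V → Subgroup V := fun σ => Subgroup.closure (insert σ (F : Set V)) with hEdef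
      set T : Set (Subgroup V) :=
        insert F (E '' (Sig ∩ {σ | IsOfFinOrder σ ∧ σ ∉ N})) with hTdef
      have hTfin : T.Finite :=
        Set.Finite.insert F ((hSigfin.inter_of_left _).image E)
      -- every member of T is finite
      have hTmemfin : ∀ E' ∈ T, (E' : Set V).Finite := by
        intro E' hE'
        rcases hE' with rfl | ⟨σ, ⟨hσSig, hσfo, hσN⟩, rfl⟩
        · exact hFfin
        · have hσ2 : σ * σ ∈ F := by
            refine ⟨(hmemN _).2 ?_, ?_⟩
            · have h1 : σ * t * σ⁻¹ = t⁻¹ := hN2 σ hσN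
              calc σ * σ * t * (σ * σ)⁻¹ = σ * (σ * t * σ⁻¹) * σ⁻¹ := by group
                _ = σ * t⁻¹ * σ⁻¹ := by rw [h1]
                _ = (σ * t * σ⁻¹)⁻¹ := by group
                _ = t := by rw [h1]; group
            · have := hσfo.pow (n := 2)
              rwa [pow_two] at this
          -- the local subgroup F ∪ σF
          have hWmul : ∀ {x y : V}, (x ∈ F ∨ σ⁻¹ * x ∈ F) → (y ∈ F ∨ σ⁻¹ * y ∈ F) →
              (x * y ∈ F ∨ σ⁻¹ * (x * y) ∈ F) := by
            rintro x y (hx | hx) (hy | hy)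
            · exact Or.inl (F.mul_mem hx hy)
            · refine Or.inr ?_
              have : σ⁻¹ * (x * y) = (σ⁻¹ * x * σ⁻¹⁻¹) * (σ⁻¹ * y) := by group
              rw [this]
              exact F.mul_mem (hFconj σ⁻¹ x hx) hy
            · refine Or.inr ?_
              have : σ⁻¹ * (x * y) = (σ⁻¹ * x) * y := by group
              rw [this]
              exact F.mul_mem hx hy
            · refine Or.inl ?_
              have : x * y = (σ * σ) * ((σ⁻¹ * (σ⁻¹ * x) * σ⁻¹⁻¹) * (σ⁻¹ * y)) := by group
              rw [this]
              exact F.mul_mem hσ2 (F.mul_mem (hFconj σ⁻¹ _ hx) hy)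
          have hWinv : ∀ {x : V}, (x ∈ F ∨ σ⁻¹ * x ∈ F) → (x⁻¹ ∈ F ∨ σ⁻¹ * x⁻¹ ∈ F) := by
            rintro x (hx | hx)
            · exact Or.inl (F.inv_mem hx)
            · refine Or.inr ?_
              have : σ⁻¹ * x⁻¹ = (σ⁻¹ * (σ⁻¹ * x)⁻¹ * σ⁻¹⁻¹) * (σ * σ)⁻¹ := by group
              rw [this]
              exact F.mul_mem (hFconj σ⁻¹ _ (F.inv_mem hx)) (F.inv_mem hσ2)
          set W : Subgroup V := ⟨⟨⟨{x : V | x ∈ F ∨ σ⁻¹ * x ∈ F}, hWmul⟩,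
            Or.inl F.one_mem⟩, hWinv⟩ with hWdef
          have hEW : E σ ≤ W := by
            rw [hEdef]
            refine Subgroup.closure_le W |>.2 ?_
            rintro x (rfl | hx)
            · exact Or.inr (by rw [inv_mul_cancel]; exact F.one_mem)
            · exact Or.inl hx
          have hWsub : (W : Set V) ⊆ (F : Set V) ∪ (fun f => σ * f) '' (F : Set V) := by
            rintro x (hx | hx)
            · exact Or.inl hx
            · exact Or.inr ⟨σ⁻¹ * x, hx, by group⟩
          exact ((hFfin.union (hFfin.image _)).subset hWsub).subset hEW
      refine ⟨T, hTfin, hTmemfin, ?_⟩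
      intro K hK
      by_cases hKN : ∀ x ∈ K, x ∈ N
      · refine ⟨F, Set.mem_insert F _, 1, ?_⟩
        rw [aux_map_conj_one]
        intro x hx
        exact ⟨hKN x hx, aux_mem_finorder hK hx⟩
      · push_neg at hKN
        obtain ⟨s, hsK, hsN⟩ := hKN
        have hsfo : IsOfFinOrder s := aux_mem_finorder hK hsK
        have hsts : s * t * s⁻¹ = t⁻¹ := hN2 s hsN
        set q : V ⧸ C := QuotientGroup.mk s with hqdef
        set ρ : V := Quotient.out q with hρdef
        have hmk : (QuotientGroup.mk ρ : V ⧸ C) = QuotientGroup.mk s := by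
          rw [hρdef, hqdef]
          exact Quotient.out_eq' _
        have hsρ : s⁻¹ * ρ ∈ C := QuotientGroup.eq.1 hmk.symm
        obtain ⟨b, hb⟩ := Subgroup.mem_zpowers_iff.1 (hCt hsρ)
        have hs1 : s = ρ * (t ^ b)⁻¹ := by rw [hb]; group
        have hexa : ∃ a : ℤ, s = t ^ a * ρ := by
          rcases key ρ with h | h
          · refine ⟨-b, ?_⟩
            have hcomm : ρ * (t ^ b)⁻¹ = (t ^ b)⁻¹ * ρ := by
              have h1 : ρ * t = t * ρ := by
                calc ρ * t = (ρ * t * ρ⁻¹) * ρ := by group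
                  _ = t * ρ := by rw [h]
              have := (Commute.zpow_right h1 b).eq
              -- this : ρ * t ^ b = t ^ b * ρ
              calc ρ * (t ^ b)⁻¹ = (t ^ b)⁻¹ * (t ^ b * ρ) * (t ^ b)⁻¹ := by group
                _ = (t ^ b)⁻¹ * (ρ * t ^ b) * (t ^ b)⁻¹ := by rw [this]
                _ = (t ^ b)⁻¹ * ρ := by group
            rw [hs1, hcomm, zpow_neg]
          · refine ⟨b, ?_⟩
            have h2 : ρ * (t ^ b)⁻¹ * ρ⁻¹ = t ^ b := by
              have : ρ * (t ^ b)⁻¹ * ρ⁻¹ = (ρ * t * ρ⁻¹) ^ (-b) := by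
                rw [conj_zpow]; group
              rw [this, h]
              group
            calc s = (ρ * (t ^ b)⁻¹ * ρ⁻¹) * ρ := by rw [hs1]; group
              _ = t ^ b * ρ := by rw [h2]
        obtain ⟨a, ha⟩ := hexa
        -- choose c and the boolean so that conjugating by t^c lands s in Sig
        obtain ⟨c, dd, hcd⟩ : ∃ (c : ℤ) (dd : Bool),
            c + c + a = (if dd then 1 else 0) := by
          rcases Int.even_or_odd a with ⟨k, hk⟩ | ⟨k, hk⟩
          · exact ⟨-k, false, by rw [if_neg Bool.false_ne_true]; omega⟩
          · exact ⟨-k, true, by rw [if_pos rfl]; omega⟩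
        set σ : V := t ^ c * s * (t ^ c)⁻¹ with hσdef
        have hst : s * (t ^ c)⁻¹ = t ^ c * s := by
          have h1 : s * (t ^ c)⁻¹ * s⁻¹ = t ^ c := by
            have : s * (t ^ c)⁻¹ * s⁻¹ = (s * t * s⁻¹) ^ (-c) := by rw [conj_zpow]; group
            rw [this, hsts]
            group
          calc s * (t ^ c)⁻¹ = (s * (t ^ c)⁻¹ * s⁻¹) * s := by group
            _ = t ^ c * s := by rw [h1]
        have hσval : σ = (if dd then t else 1) * ρ := by
          rw [hσdef]
          calc t ^ c * s * (t ^ c)⁻¹ = t ^ c * (s * (t ^ c)⁻¹) := by group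
            _ = t ^ c * (t ^ c * s) := by rw [hst]
            _ = t ^ c * t ^ c * (t ^ a * ρ) := by rw [ha]; group
            _ = t ^ (c + c + a) * ρ := by group
            _ = (if dd then t else 1) * ρ := by
                rw [hcd]
                cases dd <;> simp
        have hσSig : σ ∈ Sig := by
          rw [hσval, hSigdef]
          exact ⟨(q, dd), rfl⟩
        have hσfo : IsOfFinOrder σ := by
          rw [hσdef]
          exact aux_conj_finorder _ hsfo
        have hσN : σ ∉ N := by
          intro hσmem
          apply hsN
          have := hNconj (t ^ c)⁻¹ σ hσmem
          have he : (t ^ c)⁻¹ * σ * (t ^ c)⁻¹⁻¹ = s := by rw [hσdef]; group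
          rwa [he] at this
        refine ⟨E σ, Set.mem_insert_of_mem _ ⟨σ, ⟨hσSig, hσfo, hσN⟩, rfl⟩, t ^ c, ?_⟩
        intro x' hx'
        rw [Subgroup.mem_map] at hx'
        obtain ⟨x, hxK, hxe⟩ := hx'
        have hxe' : x' = t ^ c * x * (t ^ c)⁻¹ := by
          rw [← hxe]
          rfl
        have hxfo : IsOfFinOrder x := aux_mem_finorder hK hxK
        by_cases hxN : x ∈ N
        · have hxF : x ∈ F := ⟨hxN, hxfo⟩
          have : x' ∈ F := by rw [hxe']; exact hFconj _ x hxF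
          exact Subgroup.subset_closure (Set.mem_insert_of_mem σ this)
        · have hsx : s⁻¹ * x ∈ N := by
            rw [hmemN]
            have hxt : x * t * x⁻¹ = t⁻¹ := hN2 x hxN
            have hst' : s⁻¹ * t⁻¹ * s = t := by
              calc s⁻¹ * t⁻¹ * s = s⁻¹ * (s * t * s⁻¹) * s := by rw [hsts]
                _ = t := by group
            calc s⁻¹ * x * t * (s⁻¹ * x)⁻¹ = s⁻¹ * (x * t * x⁻¹) * s := by group
              _ = s⁻¹ * t⁻¹ * s := by rw [hxt]
              _ = t := hst'
          have hsxF : s⁻¹ * x ∈ F := ⟨hsx, aux_mem_finorder hK (K.mul_mem (K.inv_mem hsK) hxK)⟩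
          have hσx : σ⁻¹ * x' ∈ F := by
            have he : σ⁻¹ * x' = t ^ c * (s⁻¹ * x) * (t ^ c)⁻¹ := by
              rw [hσdef, hxe']
              group
            rw [he]
            exact hFconj _ _ hsxF
          have hx'eq : x' = σ * (σ⁻¹ * x') := by group
          rw [hx'eq]
          exact Subgroup.mul_mem _
            (Subgroup.subset_closure (Set.mem_insert σ _))
            (Subgroup.subset_closure (Set.mem_insert_of_mem σ hσx))

end AuxBVC

theorem stmt_7 {G : Type*} [Group G] (hG : HasBVC G) :
    (∃ S : Finset (Subgroup G), ∀ H : Subgroup G, Set.Finite (H : Set G) →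
      ∃ K ∈ S, ∃ g : G, H.map (MulAut.conj g).toMonoidHom = K) ∧
    ∃ N : ℕ, ∀ H : Subgroup G, Set.Finite (H : Set G) → Nat.card H ≤ N := by
  classical
  obtain ⟨S, hSvc, hSconj⟩ := hG
  have hV' : ∀ W : {W : Subgroup G // W ∈ S}, IsVirtuallyCyclic W.1 := fun W => hSvc W.1 W.2
  choose TV hTVfin hTVmemfin hTVcov using fun W : {W : Subgroup G // W ∈ S} =>
    lemA (W.1 : Subgroup G) (hV' W)
  -- the global finite set of finite "target" subgroups
  set TG : Set (Subgroup G) :=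
    ⋃ W : {W : Subgroup G // W ∈ S}, (fun E => Subgroup.map W.1.subtype E) '' TV W with hTGdef
  have hTGfin : TG.Finite := by
    refine Set.finite_iUnion fun W => ?_
    exact (hTVfin W).image _
  have hTGmemfin : ∀ E ∈ TG, (E : Set G).Finite := by
    intro E hE
    rw [hTGdef] at hE
    obtain ⟨s, ⟨W, rfl⟩, hmem⟩ := hE
    obtain ⟨E', hE', rfl⟩ := hmem
    rw [Subgroup.coe_map]
    exact (hTVmemfin W E' hE').image _
  have hTGcov : ∀ H : Subgroup G, (H : Set G).Finite →
      ∃ E ∈ TG, ∃ g : G, H.map (MulAut.conj g).toMonoidHom ≤ E := by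
    intro H hH
    haveI : Finite H := hH.to_subtype
    have hHvc : IsVirtuallyCyclic H :=
      ⟨⊥, isCyclic_of_subsingleton, inferInstance⟩
    obtain ⟨W, hWS, g, hle⟩ := hSconj H hHvc
    set H' : Subgroup W := (H.map (MulAut.conj g).toMonoidHom).subgroupOf W with hH'def
    have hmapfin : ((H.map (MulAut.conj g).toMonoidHom) : Set G).Finite := by
      rw [Subgroup.coe_map]
      exact hH.image _
    have hH'fin : (H' : Set W).Finite := by
      have hsub : (H' : Set W) ⊆ Subtype.val ⁻¹' ((H.map (MulAut.conj g).toMonoidHom) : Set G) := by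
        intro x hx
        exact hx
      exact (hmapfin.preimage (Subtype.val_injective.injOn)).subset hsub
    obtain ⟨E', hE'mem, v, hve⟩ := hTVcov ⟨W, hWS⟩ H' hH'fin
    refine ⟨E'.map W.subtype, ?_, (v : G) * g, ?_⟩
    · rw [hTGdef]
      exact Set.mem_iUnion.2 ⟨⟨W, hWS⟩, ⟨E', hE'mem, rfl⟩⟩
    · rw [aux_map_conj_mul]
      have h1 : H.map (MulAut.conj g).toMonoidHom = H'.map W.subtype := by
        rw [hH'def, Subgroup.subgroupOf_map_subtype]
        exact (inf_of_le_left hle).symm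
      rw [h1, ← aux_map_conj_subtype]
      exact Subgroup.map_mono hve
  constructor
  · have hSSfin : {K : Subgroup G | ∃ E ∈ TG, K ≤ E}.Finite := by
      have heq : {K : Subgroup G | ∃ E ∈ TG, K ≤ E} = ⋃ E ∈ TG, {K : Subgroup G | K ≤ E} := by
        ext K
        simp
      rw [heq]
      exact hTGfin.biUnion fun E hE => aux_finite_subgroups_le (hTGmemfin E hE)
    refine ⟨hSSfin.toFinset, ?_⟩
    intro H hH
    obtain ⟨E, hE, g, hle⟩ := hTGcov H hH
    refine ⟨H.map (MulAut.conj g).toMonoidHom, ?_, g, rfl⟩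
    exact (hSSfin.mem_toFinset).2 ⟨E, hE, hle⟩
  · refine ⟨hTGfin.toFinset.sup fun E => Nat.card E, ?_⟩
    intro H hH
    obtain ⟨E, hE, g, hle⟩ := hTGcov H hH
    have h1 : Nat.card H = Nat.card (H.map (MulAut.conj g).toMonoidHom) :=
      (aux_card_map_conj H g).symm
    haveI : Finite E := (hTGmemfin E hE).to_subtype
    have h2 : Nat.card (H.map (MulAut.conj g).toMonoidHom) ≤ Nat.card E :=
      Subgroup.card_le_of_le hle
    calc Nat.card H ≤ Nat.card E := by rw [h1]; exact h2
      _ ≤ hTGfin.toFinset.sup fun E => Nat.card E :=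
          Finset.le_sup (f := fun E : Subgroup G => Nat.card E) ((hTGfin.mem_toFinset).2 hE)
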